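/- Let ℓ₁,…,ℓ_d be a sequence of positive integers and let P = [ℓ₁]×⋯×[ℓ_d]. Then for any two ideals I and J of P, |I ∩ J| · |P| ≥ |I| · |J|; equivalently, the density μ(I ∩ J) = |I ∩ J|/|P| satisfies μ(I ∩ J) ≥ μ(I)·μ(J). -/

import Mathlib

open Finset
open scoped FinsetFamily

/-- An ideal (downward-closed subset, possibly empty) of a finite poset. -/
def IsIdeal {P : Type*} [PartialOrder P] (I : Finset P) : Prop :=
  ∀ a ∈ I, ∀ b, b ≤ a → b ∈ I

/-- A self-complementary ideal with respect to an involution `φ`. -/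
def IsSCIdeal {P : Type*} [PartialOrder P] (φ : P → P) (I : Finset P) : Prop :=
  IsIdeal I ∧ ∀ a, a ∈ I ↔ φ a ∉ I

/-- The flip graph on self-complementary ideals: two ideals are adjacent when they
differ in exactly one element each way. -/
def FlipGraph {P : Type*} [PartialOrder P] [DecidableEq P] (φ : P → P) :
    SimpleGraph {I : Finset P // IsSCIdeal φ I} where
  Adj I J := I ≠ J ∧ (I.1 \ J.1).card = 1 ∧ (J.1 \ I.1).card = 1
  symm := ⟨fun _ _ h => ⟨h.1.symm, h.2.2, h.2.1⟩⟩
  loopless := ⟨fun _ h => h.1 rfl⟩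

/-- Eccentricity of a vertex: its maximum distance to any vertex. -/
noncomputable def eccentricity {V : Type*} (G : SimpleGraph V) (v : V) : ℕ :=
  ⨆ u, G.dist v u

/-- Diameter of a graph: the maximum eccentricity. -/
noncomputable def graphDiam {V : Type*} (G : SimpleGraph V) : ℕ :=
  ⨆ v, eccentricity G v

/-- Radius of a graph: the minimum eccentricity. -/
noncomputable def graphRadius {V : Type*} (G : SimpleGraph V) : ℕ :=
  ⨅ v, eccentricity G v

/-- The order-reversing involution `aᵢ ↦ ℓᵢ + 1 - aᵢ` on a product of chains
(0-indexed via `Fin.rev`). -/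
def chainRev {d : ℕ} (ℓ : Fin d → ℕ) (a : ∀ i, Fin (ℓ i)) : ∀ i, Fin (ℓ i) :=
  fun i => (a i).rev

/-- Correlation inequality for ideals of a product of chains:
`|I ∩ J| · |P| ≥ |I| · |J|`. -/
theorem ideal_correlation (d : ℕ) (ℓ : Fin d → ℕ) (hpos : ∀ i, 0 < ℓ i)
    (I J : Finset (∀ i, Fin (ℓ i))) (hI : IsIdeal I) (hJ : IsIdeal J) :
    I.card * J.card ≤ (I ∩ J).card * Fintype.card (∀ i, Fin (ℓ i)) := by
  classical
  calc I.card * J.card ≤ (I ⊼ J).card * (I ⊻ J).card :=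
        Finset.le_card_infs_mul_card_sups I J
    _ ≤ (I ∩ J).card * Fintype.card (∀ i, Fin (ℓ i)) := by
        apply Nat.mul_le_mul
        · apply Finset.card_le_card
          intro x hx
          obtain ⟨a, ha, b, hb, rfl⟩ := Finset.mem_infs.1 hx
          exact Finset.mem_inter.2 ⟨hI a ha _ inf_le_left, hJ b hb _ inf_le_right⟩
        · exact Finset.card_le_univ _
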